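/- Let X and Y be real normed spaces with dim X = 1, and let f : X → Y be a surjective map satisfying the phase-isometry condition. Then there exist a surjective linear isometry U : X → Y and a function σ : X → {−1, 1} such that f(x) = σ(x) • U(x) for all x ∈ X; indeed, fixing a unit vector x₀ ∈ X, the map U defined by U(λ • x₀) = λ • f(x₀) is a surjective linear isometry and f(λ • x₀) = ± U(λ • x₀) for every λ ∈ ℝ. -/

import Mathlib

/-- The phase-isometry condition: `{‖f x + f y‖, ‖f x − f y‖} = {‖x + y‖, ‖x − y‖}` as sets. -/
def PhaseIsometry {X Y : Type*} [NormedAddCommGroup X] [NormedAddCommGroup Y]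
    (f : X → Y) : Prop :=
  ∀ x y : X, ({‖f x + f y‖, ‖f x - f y‖} : Set ℝ) = {‖x + y‖, ‖x - y‖}

theorem phase_isometry_dim_one
    {X Y : Type*} [NormedAddCommGroup X] [NormedSpace ℝ X]
    [NormedAddCommGroup Y] [NormedSpace ℝ Y]
    (hdim : Module.finrank ℝ X = 1)
    (f : X → Y) (hsurj : Function.Surjective f) (hf : PhaseIsometry f) :
    (∃ U : X →ₗᵢ[ℝ] Y, Function.Surjective U ∧
      ∃ σ : X → ℝ, (∀ x : X, σ x = 1 ∨ σ x = -1) ∧ ∀ x : X, f x = σ x • U x) ∧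
    ∀ x₀ : X, ‖x₀‖ = 1 →
      ∃ U : X →ₗᵢ[ℝ] Y, Function.Surjective U ∧
        (∀ lam : ℝ, U (lam • x₀) = lam • f x₀) ∧
        (∀ lam : ℝ, f (lam • x₀) = U (lam • x₀) ∨ f (lam • x₀) = -U (lam • x₀)) := by
  classical
  -- f preserves norms
  have hnorm : ∀ x : X, ‖f x‖ = ‖x‖ := by
    intro x
    have h := hf x x
    simp only [sub_self, norm_zero] at h
    have e1 : ‖f x + f x‖ = 2 * ‖f x‖ := by
      rw [← two_smul ℝ, norm_smul]; simp
    have e2 : ‖x + x‖ = 2 * ‖x‖ := by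
      rw [← two_smul ℝ, norm_smul]; simp
    rw [e1, e2, Set.pair_eq_pair_iff] at h
    have n1 := norm_nonneg (f x)
    have n2 := norm_nonneg x
    rcases h with ⟨h1, _⟩ | ⟨h1, h2⟩ <;> linarith
  -- representation of X by a nonzero vector
  have hspan : ∀ x₀ : X, x₀ ≠ 0 → ∀ x : X, ∃ c : ℝ, c • x₀ = x := by
    intro x₀ hx₀ne x
    have hs := (finrank_eq_one_iff_of_nonzero x₀ hx₀ne).mp hdim
    have hx : x ∈ Submodule.span ℝ ({x₀} : Set X) := by rw [hs]; trivial
    exact Submodule.mem_span_singleton.mp hx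
  -- the main construction, for any unit vector x₀
  have hmain : ∀ x₀ : X, ‖x₀‖ = 1 →
      ∃ U : X →ₗᵢ[ℝ] Y, Function.Surjective U ∧
        (∀ lam : ℝ, U (lam • x₀) = lam • f x₀) ∧
        (∀ lam : ℝ, f (lam • x₀) = U (lam • x₀) ∨ f (lam • x₀) = -U (lam • x₀)) := by
    intro x₀ hx₀
    have hx₀ne : x₀ ≠ 0 := by
      intro h; rw [h, norm_zero] at hx₀; norm_num at hx₀
    -- key ± lemma
    have hpm : ∀ lam : ℝ, f (lam • x₀) = lam • f x₀ ∨ f (lam • x₀) = -(lam • f x₀) := by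
      intro lam
      obtain ⟨w, hw⟩ := hsurj (lam • f x₀)
      have hwn : ‖w‖ = |lam| := by
        rw [← hnorm w, hw, norm_smul, hnorm x₀, hx₀, mul_one, Real.norm_eq_abs]
      obtain ⟨c, hc⟩ := hspan x₀ hx₀ne w
      have hcn : |c| = |lam| := by
        rw [← hwn, ← hc, norm_smul, hx₀, mul_one, Real.norm_eq_abs]
      rcases abs_eq_abs.mp hcn with h1 | h1
      · left; rw [← hw, ← hc, h1]
      · have hkey := hf (lam • x₀) w
        have ha : lam • x₀ + w = 0 := by rw [← hc, h1]; module
        rw [ha, norm_zero] at hkey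
        have h0 : (0 : ℝ) ∈ ({‖f (lam • x₀) + f w‖, ‖f (lam • x₀) - f w‖} : Set ℝ) := by
          rw [hkey]; left; rfl
        rcases h0 with h0 | h0
        · right
          have : f (lam • x₀) + f w = 0 := by
            rw [← norm_eq_zero]; exact h0.symm
          rw [← hw]
          exact eq_neg_of_add_eq_zero_left this
        · left
          rw [Set.mem_singleton_iff] at h0
          have : f (lam • x₀) - f w = 0 := by
            rw [← norm_eq_zero]; exact h0.symm
          rw [← hw]
          exact sub_eq_zero.mp this
    -- the linear isometry
    let b : Module.Basis (Fin 1) ℝ X := FiniteDimensional.basisSingleton (Fin 1) hdim x₀ hx₀ne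
    let L : X →ₗ[ℝ] Y := b.constr ℝ (fun _ => f x₀)
    have hb : b 0 = x₀ := FiniteDimensional.basisSingleton_apply (Fin 1) hdim x₀ hx₀ne 0
    have hLx : L x₀ = f x₀ := by
      conv_lhs => rw [← hb]
      exact b.constr_basis ℝ _ 0
    have hL : ∀ lam : ℝ, L (lam • x₀) = lam • f x₀ := by
      intro lam
      rw [map_smul, hLx]
    have hLnorm : ∀ x : X, ‖L x‖ = ‖x‖ := by
      intro x
      obtain ⟨c, hc⟩ := hspan x₀ hx₀ne x
      rw [← hc, hL, norm_smul, norm_smul, hnorm]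
    refine ⟨⟨L, hLnorm⟩, ?_, hL, ?_⟩
    · intro z
      obtain ⟨w, hw⟩ := hsurj z
      obtain ⟨c, hc⟩ := hspan x₀ hx₀ne w
      rcases hpm c with h | h
      · exact ⟨c • x₀, by rw [LinearIsometry.coe_mk, hL, ← h, hc, hw]⟩
      · refine ⟨(-c) • x₀, ?_⟩
        rw [LinearIsometry.coe_mk, hL, ← hw, ← hc, h, neg_smul]
    · intro lam
      rcases hpm lam with h | h
      · left; rw [LinearIsometry.coe_mk, hL]; exact h
      · right; rw [LinearIsometry.coe_mk, hL]; exact h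
  refine ⟨?_, hmain⟩
  -- obtain a unit vector
  have : Nontrivial X := by
    rcases subsingleton_or_nontrivial X with h | h
    · exfalso
      rw [Module.finrank_zero_of_subsingleton] at hdim
      norm_num at hdim
    · exact h
  obtain ⟨v, hv⟩ := exists_ne (0 : X)
  have hx₀ : ‖(‖v‖⁻¹ • v : X)‖ = 1 := norm_smul_inv_norm hv
  set x₀ : X := ‖v‖⁻¹ • v with hx₀def
  have hx₀ne : x₀ ≠ 0 := by
    intro h; rw [h, norm_zero] at hx₀; norm_num at hx₀
  obtain ⟨U, hUs, hUl, hUpm⟩ := hmain x₀ hx₀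
  refine ⟨U, hUs, fun x => if f x = U x then 1 else -1, fun x => ?_, fun x => ?_⟩
  · show (if f x = U x then (1:ℝ) else -1) = 1 ∨ (if f x = U x then (1:ℝ) else -1) = -1
    split <;> simp
  · obtain ⟨c, hc⟩ := hspan x₀ hx₀ne x
    have hx : f x = U x ∨ f x = -U x := by
      rw [← hc]; exact hUpm c
    show f x = (if f x = U x then (1:ℝ) else -1) • U x
    split_ifs with h
    · rw [one_smul, h]
    · rcases hx with h' | h'
      · exact absurd h' h
      · rw [neg_one_smul, h']
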